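/- Veselova's quartic integral: let A be an invertible 3×3 real matrix, let L, γ : ℝ → ℝ³ be differentiable and λ : ℝ → ℝ continuous, with Ω = A⁻¹L, and suppose L̇ = L × Ω + λγ and γ̇ = γ × Ω hold for all t, and that ⟨γ(0), γ(0)⟩ = 1. Then the quantity G = ⟨L, L⟩ − ⟨L, γ⟩² is constant in t. -/

import Mathlib

open Matrix

/-- Euclidean inner product on ℝ³. -/
def dot3 (u v : Fin 3 → ℝ) : ℝ := u 0 * v 0 + u 1 * v 1 + u 2 * v 2

/-- Cross product on ℝ³. -/
def cross3 (u v : Fin 3 → ℝ) : Fin 3 → ℝ :=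
  ![u 1 * v 2 - u 2 * v 1, u 2 * v 0 - u 0 * v 2, u 0 * v 1 - u 1 * v 0]

/-- **Veselova's quartic integral.**  With `A` invertible, `Ω = A⁻¹L`, equations
`L̇ = L × Ω + λγ`, `γ̇ = γ × Ω` (λ continuous), and `⟨γ(0), γ(0)⟩ = 1`, the quantity
`G = ⟨L, L⟩ − ⟨L, γ⟩²` is constant in `t`. -/
theorem veselova_quartic_integral
    (A : Matrix (Fin 3) (Fin 3) ℝ) (hinv : IsUnit A.det)
    (L γ : ℝ → Fin 3 → ℝ) (lam : ℝ → ℝ) (hlam : Continuous lam)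
    (Ω : ℝ → Fin 3 → ℝ) (hΩ : ∀ t, Ω t = A⁻¹.mulVec (L t))
    (hL : ∀ t, HasDerivAt L (cross3 (L t) (Ω t) + lam t • γ t) t)
    (hγ : ∀ t, HasDerivAt γ (cross3 (γ t) (Ω t)) t)
    (hγ0 : dot3 (γ 0) (γ 0) = 1) :
    ∀ s t, dot3 (L s) (L s) - (dot3 (L s) (γ s)) ^ 2
        = dot3 (L t) (L t) - (dot3 (L t) (γ t)) ^ 2 := by
  -- derivatives of components
  have hLc : ∀ t i, HasDerivAt (fun t => L t i)
      ((cross3 (L t) (Ω t) + lam t • γ t) i) t := fun t i =>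
    hasDerivAt_pi.1 (hL t) i
  have hγc : ∀ t i, HasDerivAt (fun t => γ t i)
      (cross3 (γ t) (Ω t) i) t := fun t i =>
    hasDerivAt_pi.1 (hγ t) i
  -- ⟨γ, γ⟩ is constant
  have hn : ∀ t, HasDerivAt (fun t => dot3 (γ t) (γ t)) 0 t := by
    intro t
    have h := (((hγc t 0).mul (hγc t 0)).add ((hγc t 1).mul (hγc t 1))).add
      ((hγc t 2).mul (hγc t 2))
    refine h.congr_deriv ?_
    simp [cross3]
    ring
  have hnconst : ∀ t, dot3 (γ t) (γ t) = 1 := by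
    intro t
    have := is_const_of_deriv_eq_zero (f := fun t => dot3 (γ t) (γ t))
      (fun t => (hn t).differentiableAt) (fun t => (hn t).deriv) t 0
    simpa [hγ0] using this
  -- the quartic has zero derivative
  have hG : ∀ t, HasDerivAt
      (fun t => dot3 (L t) (L t) - (dot3 (L t) (γ t)) ^ 2) 0 t := by
    intro t
    have hd1 : HasDerivAt (fun t => dot3 (L t) (L t))
        (2 * ((L t 0) * ((cross3 (L t) (Ω t) + lam t • γ t) 0)
          + (L t 1) * ((cross3 (L t) (Ω t) + lam t • γ t) 1)
          + (L t 2) * ((cross3 (L t) (Ω t) + lam t • γ t) 2))) t := by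
      have h := (((hLc t 0).mul (hLc t 0)).add ((hLc t 1).mul (hLc t 1))).add
        ((hLc t 2).mul (hLc t 2))
      refine h.congr_deriv ?_
      ring
    have hd2 : HasDerivAt (fun t => dot3 (L t) (γ t))
        (((cross3 (L t) (Ω t) + lam t • γ t) 0) * γ t 0
          + L t 0 * cross3 (γ t) (Ω t) 0
          + (((cross3 (L t) (Ω t) + lam t • γ t) 1) * γ t 1
          + L t 1 * cross3 (γ t) (Ω t) 1)
          + (((cross3 (L t) (Ω t) + lam t • γ t) 2) * γ t 2
          + L t 2 * cross3 (γ t) (Ω t) 2)) t :=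
      (((hLc t 0).mul (hγc t 0)).add ((hLc t 1).mul (hγc t 1))).add
        ((hLc t 2).mul (hγc t 2))
    have h := hd1.sub (hd2.pow 2)
    refine h.congr_deriv ?_
    symm
    have h1 := hnconst t
    simp only [dot3, cross3, Pi.add_apply, Pi.smul_apply, smul_eq_mul,
      Matrix.cons_val_zero, Matrix.cons_val_one, Matrix.head_cons,
      Matrix.cons_val_two, Matrix.tail_cons] at *
    push_cast
    linear_combination (2 * lam t * (L t 0 * γ t 0 + L t 1 * γ t 1 + L t 2 * γ t 2)) * h1
  intro s t
  exact is_const_of_deriv_eq_zero (f := fun t => dot3 (L t) (L t) - (dot3 (L t) (γ t)) ^ 2)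
    (fun t => (hG t).differentiableAt) (fun t => (hG t).deriv) s t
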